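/- Let α ∈ ℝ and 0 < R₁ < R₂. Let f : [R₁,∞) → ℝ be continuously differentiable with 0 < ∫_{R₁}^∞ f(r)²·r dr < ∞ and ∫_{R₁}^∞ f'(r)²·r dr < ∞, and assume N₁ := ∫_{R₁}^∞ ( f'(r)² + f(r)²/r² )·r dr + α·R₁·f(R₁)² < 0. Define f₂ : [R₂,∞) → ℝ by f₂(r) := f(r + R₁ − R₂). Then [ ∫_{R₂}^∞ ( f₂'(r)² + f₂(r)²/r² )·r dr + α·R₂·f₂(R₂)² ] / ∫_{R₂}^∞ f₂(r)²·r dr < N₁ / ∫_{R₁}^∞ f(r)²·r dr. -/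

import Mathlib

open MeasureTheory

lemma shift_integral' (g : ℝ → ℝ) (a c : ℝ) :
    ∫ x in Set.Ioi (a + c), g x = ∫ x in Set.Ioi a, g (x + c) := by
  rw [← (measurePreserving_add_right volume c).setIntegral_preimage_emb
    (measurableEmbedding_addRight c) g (Set.Ioi (a + c))]
  congr 1
  ext x
  simp

set_option maxHeartbeats 1000000 in

/-- Strict monotonicity in the radius of the Rayleigh quotient of the angular
momentum `1` fibre of the Robin Laplacian on the exterior of a disk: if
`0 < R₁ < R₂`, `f` is `C¹` on `[R₁,∞)` with the stated integrability and
positivity properties and negative Rayleigh numerator `N₁` at radius `R₁`,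
then the Rayleigh quotient of the shifted function `f₂(r) = f(r + R₁ - R₂)`
at radius `R₂` is strictly smaller than that of `f` at radius `R₁`. -/
theorem stmt_10 (α R₁ R₂ : ℝ) (hR₁ : 0 < R₁) (hR₁₂ : R₁ < R₂)
    (f : ℝ → ℝ) (hf : ContDiff ℝ 1 f)
    (hfsq : IntegrableOn (fun r => (f r) ^ 2 * r) (Set.Ioi R₁))
    (hfpos : 0 < ∫ r in Set.Ioi R₁, (f r) ^ 2 * r)
    (hf' : IntegrableOn (fun r => (deriv f r) ^ 2 * r) (Set.Ioi R₁))
    (hN : (∫ r in Set.Ioi R₁, ((deriv f r) ^ 2 + (f r) ^ 2 / r ^ 2) * r) +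
        α * R₁ * (f R₁) ^ 2 < 0) :
    ((∫ r in Set.Ioi R₂,
        ((deriv (fun x => f (x + R₁ - R₂)) r) ^ 2 +
          (f (r + R₁ - R₂)) ^ 2 / r ^ 2) * r) +
      α * R₂ * (f R₁) ^ 2) /
        (∫ r in Set.Ioi R₂, (f (r + R₁ - R₂)) ^ 2 * r) <
    ((∫ r in Set.Ioi R₁, ((deriv f r) ^ 2 + (f r) ^ 2 / r ^ 2) * r) +
      α * R₁ * (f R₁) ^ 2) /
        (∫ r in Set.Ioi R₁, (f r) ^ 2 * r) := by
  have hs0 : 0 < R₂ - R₁ := sub_pos.mpr hR₁₂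
  set s : ℝ := R₂ - R₁ with hs
  set k : ℝ := R₂ / R₁ with hk
  clear_value s k
  have hk1 : 1 < k := by rw [hk]; exact (one_lt_div hR₁).mpr hR₁₂
  have hcf : Continuous f := hf.continuous
  have hcf' : Continuous (deriv f) := hf.continuous_deriv le_rfl
  -- rewrite the derivative of the shifted function
  have hderiv : ∀ r : ℝ, deriv (fun x => f (x + R₁ - R₂)) r = deriv f (r + R₁ - R₂) := by
    intro r
    have h1 : (fun x => f (x + R₁ - R₂)) = fun x => f (x + (R₁ - R₂)) := by
      ext x; ring_nf
    rw [h1, deriv_comp_add_const]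
    ring_nf
  -- change of variables in the two `Ioi R₂` integrals
  have hR₂eq : R₂ = R₁ + s := by rw [hs]; ring
  have hnum : (∫ r in Set.Ioi R₂,
        ((deriv (fun x => f (x + R₁ - R₂)) r) ^ 2 +
          (f (r + R₁ - R₂)) ^ 2 / r ^ 2) * r)
      = ∫ t in Set.Ioi R₁, ((deriv f t) ^ 2 + (f t) ^ 2 / (t + s) ^ 2) * (t + s) := by
    simp only [hderiv]
    rw [hR₂eq, shift_integral']
    congr 1
    ext t
    have h2 : t + s + R₁ - (R₁ + s) = t := by ring
    rw [h2]
  have hden : (∫ r in Set.Ioi R₂, (f (r + R₁ - R₂)) ^ 2 * r)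
      = ∫ t in Set.Ioi R₁, (f t) ^ 2 * (t + s) := by
    rw [hR₂eq, shift_integral']
    congr 1
    ext t
    have h2 : t + s + R₁ - (R₁ + s) = t := by ring
    rw [h2]
  rw [hnum, hden]
  -- basic pointwise facts
  have hts : ∀ t ∈ Set.Ioi R₁, t + s ≤ k * t := by
    intro t ht
    rw [hk, div_mul_eq_mul_div, le_div_iff₀ hR₁]
    have ht' : R₁ < t := ht
    nlinarith
  -- integrability facts
  have hInt_fsq2 : IntegrableOn (fun t => (f t) ^ 2 * (t + s)) (Set.Ioi R₁) := by
    refine Integrable.mono' (hfsq.const_mul k) ?_ ?_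
    · exact (((hcf.pow 2).mul (continuous_id.add continuous_const))).aestronglyMeasurable
    · filter_upwards [ae_restrict_mem measurableSet_Ioi] with t ht
      have ht' : R₁ < t := ht
      have h1 : (0:ℝ) ≤ (f t) ^ 2 * (t + s) := by nlinarith [sq_nonneg (f t)]
      rw [Real.norm_eq_abs, abs_of_nonneg h1]
      have := hts t ht
      nlinarith [sq_nonneg (f t)]
  have hInt_N1 : IntegrableOn (fun r => ((deriv f r) ^ 2 + (f r) ^ 2 / r ^ 2) * r)
      (Set.Ioi R₁) := by
    refine Integrable.mono' (hf'.add (hfsq.const_mul (1 / R₁ ^ 2))) ?_ ?_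
    · exact (((hcf'.measurable.pow measurable_const).add
        ((hcf.measurable.pow measurable_const).div
          (measurable_id.pow measurable_const))).mul measurable_id).aestronglyMeasurable
    · filter_upwards [ae_restrict_mem measurableSet_Ioi] with t ht
      have ht' : R₁ < t := ht
      have ht0 : 0 < t := hR₁.trans ht'
      have h0 : (f t) ^ 2 / t ^ 2 * t = (f t) ^ 2 / t := by field_simp
      have h1 : (0:ℝ) ≤ ((deriv f t) ^ 2 + (f t) ^ 2 / t ^ 2) * t := by positivity
      rw [Real.norm_eq_abs, abs_of_nonneg h1]
      have hR2 : (0:ℝ) < R₁ ^ 2 := by positivity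
      have h2 : (f t) ^ 2 / t ≤ 1 / R₁ ^ 2 * ((f t) ^ 2 * t) := by
        rw [div_le_iff₀ ht0, one_div, inv_mul_eq_div, div_mul_eq_mul_div, le_div_iff₀ hR2]
        nlinarith [sq_nonneg (f t), mul_le_mul_of_nonneg_left
          (show R₁ ^ 2 ≤ t ^ 2 by nlinarith) (sq_nonneg (f t))]
      calc ((deriv f t) ^ 2 + (f t) ^ 2 / t ^ 2) * t
          = (deriv f t) ^ 2 * t + (f t) ^ 2 / t ^ 2 * t := by ring
        _ = (deriv f t) ^ 2 * t + (f t) ^ 2 / t := by rw [h0]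
        _ ≤ (deriv f t) ^ 2 * t + 1 / R₁ ^ 2 * ((f t) ^ 2 * t) := by linarith
  -- the key pointwise inequality
  have key : ∀ t ∈ Set.Ioi R₁,
      ((deriv f t) ^ 2 + (f t) ^ 2 / (t + s) ^ 2) * (t + s)
        ≤ k * (((deriv f t) ^ 2 + (f t) ^ 2 / t ^ 2) * t) := by
    intro t ht
    have ht' : R₁ < t := ht
    have ht0 : 0 < t := hR₁.trans ht'
    have hts0 : 0 < t + s := by linarith
    have h1 : (deriv f t) ^ 2 * (t + s) ≤ k * ((deriv f t) ^ 2 * t) := by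
      nlinarith [sq_nonneg (deriv f t), hts t ht]
    have e1 : (f t) ^ 2 / (t + s) ^ 2 * (t + s) = (f t) ^ 2 / (t + s) := by
      field_simp
    have e2 : (f t) ^ 2 / t ^ 2 * t = (f t) ^ 2 / t := by field_simp
    have h2 : (f t) ^ 2 / (t + s) ^ 2 * (t + s) ≤ k * ((f t) ^ 2 / t ^ 2 * t) := by
      rw [e1, e2]
      have h3 : (f t) ^ 2 / (t + s) ≤ (f t) ^ 2 / t :=
        div_le_div_of_nonneg_left (sq_nonneg _) ht0 (by linarith)
      have h4 : (f t) ^ 2 / t ≤ k * ((f t) ^ 2 / t) := by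
        nlinarith [div_nonneg (sq_nonneg (f t)) ht0.le]
      linarith
    calc ((deriv f t) ^ 2 + (f t) ^ 2 / (t + s) ^ 2) * (t + s)
        = (deriv f t) ^ 2 * (t + s) + (f t) ^ 2 / (t + s) ^ 2 * (t + s) := by ring
      _ ≤ k * ((deriv f t) ^ 2 * t) + k * ((f t) ^ 2 / t ^ 2 * t) := add_le_add h1 h2
      _ = k * (((deriv f t) ^ 2 + (f t) ^ 2 / t ^ 2) * t) := by ring
  have hInt_N2 : IntegrableOn
      (fun t => ((deriv f t) ^ 2 + (f t) ^ 2 / (t + s) ^ 2) * (t + s)) (Set.Ioi R₁) := by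
    refine Integrable.mono' (hInt_N1.const_mul k) ?_ ?_
    · exact (((hcf'.measurable.pow measurable_const).add
        ((hcf.measurable.pow measurable_const).div
          ((measurable_id.add measurable_const).pow measurable_const))).mul
            (measurable_id.add measurable_const)).aestronglyMeasurable
    · filter_upwards [ae_restrict_mem measurableSet_Ioi] with t ht
      have ht' : R₁ < t := ht
      have hts0 : 0 < t + s := by linarith
      have h1 : (0:ℝ) ≤ ((deriv f t) ^ 2 + (f t) ^ 2 / (t + s) ^ 2) * (t + s) := by
        positivity
      rw [Real.norm_eq_abs, abs_of_nonneg h1]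
      exact key t ht
  -- integral comparisons
  have hN2le : (∫ t in Set.Ioi R₁, ((deriv f t) ^ 2 + (f t) ^ 2 / (t + s) ^ 2) * (t + s))
      ≤ k * ∫ r in Set.Ioi R₁, ((deriv f r) ^ 2 + (f r) ^ 2 / r ^ 2) * r := by
    rw [← integral_const_mul]
    exact setIntegral_mono_on hInt_N2 (hInt_N1.const_mul k) measurableSet_Ioi key
  have hD1pos : 0 < ∫ r in Set.Ioi R₁, (f r) ^ 2 * r := hfpos
  have hD2pos : 0 < ∫ t in Set.Ioi R₁, (f t) ^ 2 * (t + s) := by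
    have h1 : (∫ r in Set.Ioi R₁, (f r) ^ 2 * r)
        ≤ ∫ t in Set.Ioi R₁, (f t) ^ 2 * (t + s) := by
      refine setIntegral_mono_on hfsq hInt_fsq2 measurableSet_Ioi ?_
      intro t _
      nlinarith [sq_nonneg (f t)]
    linarith
  -- strict inequality for the denominators
  have hD2lt : (∫ t in Set.Ioi R₁, (f t) ^ 2 * (t + s))
      < k * ∫ r in Set.Ioi R₁, (f r) ^ 2 * r := by
    have hint : IntegrableOn (fun t => k * ((f t) ^ 2 * t) - (f t) ^ 2 * (t + s))
        (Set.Ioi R₁) := (hfsq.const_mul k).sub hInt_fsq2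
    have hnonneg : 0 ≤ᵐ[volume.restrict (Set.Ioi R₁)]
        fun t => k * ((f t) ^ 2 * t) - (f t) ^ 2 * (t + s) := by
      filter_upwards [ae_restrict_mem measurableSet_Ioi] with t ht
      have h5 := hts t ht
      simp only [Pi.zero_apply]
      nlinarith [mul_nonneg (sq_nonneg (f t)) (sub_nonneg.mpr (hts t ht))]
    have hpos : 0 < ∫ t in Set.Ioi R₁, (k * ((f t) ^ 2 * t) - (f t) ^ 2 * (t + s)) := by
      rw [setIntegral_pos_iff_support_of_nonneg_ae hnonneg hint]
      obtain ⟨t₀, ht₀, hft₀⟩ : ∃ t₀, R₁ < t₀ ∧ f t₀ ≠ 0 := by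
        by_contra h
        push_neg at h
        have : (∫ r in Set.Ioi R₁, (f r) ^ 2 * r) = 0 := by
          apply setIntegral_eq_zero_of_forall_eq_zero
          intro x hx
          rw [h x hx]; ring
        linarith
      set U : Set ℝ := {x | f x ≠ 0} ∩ Set.Ioi R₁ with hU
      have hUopen : IsOpen U :=
        (isOpen_compl_singleton.preimage hcf).inter isOpen_Ioi
      have hUsub : U ⊆
          (Function.support fun t => k * ((f t) ^ 2 * t) - (f t) ^ 2 * (t + s))
            ∩ Set.Ioi R₁ := by
        rintro x ⟨hx1, hx2⟩
        refine ⟨?_, hx2⟩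
        have hx2' : R₁ < x := hx2
        have hfx : 0 < (f x) ^ 2 :=
          lt_of_le_of_ne (sq_nonneg _) (Ne.symm (pow_ne_zero 2 hx1))
        have hkx : x + s < k * x := by
          rw [hk, div_mul_eq_mul_div, lt_div_iff₀ hR₁]
          nlinarith
        have : 0 < k * ((f x) ^ 2 * x) - (f x) ^ 2 * (x + s) := by nlinarith
        exact ne_of_gt this
      have hU0 : 0 < volume U := hUopen.measure_pos volume ⟨t₀, hft₀, ht₀⟩
      exact hU0.trans_le (measure_mono hUsub)
    have heq : (∫ t in Set.Ioi R₁, (k * ((f t) ^ 2 * t) - (f t) ^ 2 * (t + s)))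
        = k * (∫ r in Set.Ioi R₁, (f r) ^ 2 * r)
          - ∫ t in Set.Ioi R₁, (f t) ^ 2 * (t + s) := by
      rw [integral_sub (hfsq.const_mul k) hInt_fsq2, integral_const_mul]
    linarith [heq ▸ hpos]
  -- final arithmetic
  have hkb : α * R₂ * (f R₁) ^ 2 = k * (α * R₁ * (f R₁) ^ 2) := by
    rw [hk]; field_simp
  have hN2 : (∫ t in Set.Ioi R₁, ((deriv f t) ^ 2 + (f t) ^ 2 / (t + s) ^ 2) * (t + s))
      + α * R₂ * (f R₁) ^ 2
      ≤ k * ((∫ r in Set.Ioi R₁, ((deriv f r) ^ 2 + (f r) ^ 2 / r ^ 2) * r)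
          + α * R₁ * (f R₁) ^ 2) := by
    rw [mul_add, hkb]
    exact add_le_add hN2le le_rfl
  rw [div_lt_div_iff₀ hD2pos hD1pos]
  set N₁ := (∫ r in Set.Ioi R₁, ((deriv f r) ^ 2 + (f r) ^ 2 / r ^ 2) * r)
      + α * R₁ * (f R₁) ^ 2 with hN₁
  set N₂ := (∫ t in Set.Ioi R₁, ((deriv f t) ^ 2 + (f t) ^ 2 / (t + s) ^ 2) * (t + s))
      + α * R₂ * (f R₁) ^ 2 with hN₂
  set D₁ := ∫ r in Set.Ioi R₁, (f r) ^ 2 * r with hD₁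
  set D₂ := ∫ t in Set.Ioi R₁, (f t) ^ 2 * (t + s) with hD₂
  have h1 : N₂ * D₁ ≤ k * N₁ * D₁ := mul_le_mul_of_nonneg_right hN2 hD1pos.le
  have h2 : N₁ * (k * D₁) < N₁ * D₂ := mul_lt_mul_of_neg_left hD2lt hN
  have h3 : k * N₁ * D₁ = N₁ * (k * D₁) := by ring
  linarith
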